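/- For every integer n ≥ 2, n·(⌊lg n⌋ − 1) + 2·(n − 2^{⌊lg n⌋}) ≤ n·lg n + (1 − 1/ln 2 − lg(2·ln 2))·n. (The constant 1 − 1/ln 2 − lg(2 ln 2) ≈ −0.913929 is the supremum of the periodic linear-term function, so the left-hand side, the comparison count of the sort-down phase of external Heapsort, is at most n·lg n − 0.913929·n.) -/

import Mathlib

lemma heapsort_key (t : ℝ) :
    1 / Real.log 2 + Real.logb 2 (2 * Real.log 2) ≤ t + (2:ℝ) ^ (1 - t : ℝ) := by
  have hL : (0:ℝ) < Real.log 2 := Real.log_pos (by norm_num)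
  have h1 : (2:ℝ) ^ (1 - t : ℝ) = Real.exp (Real.log 2 * (1 - t)) :=
    Real.rpow_def_of_pos (by norm_num) _
  have h2 : Real.exp (Real.log 2 * (1 - t))
      = Real.exp (-Real.log (Real.log 2)) *
        Real.exp (Real.log 2 * (1 - t) + Real.log (Real.log 2)) := by
    rw [← Real.exp_add]; ring_nf
  have h3 : Real.log 2 * (1 - t) + Real.log (Real.log 2) + 1
      ≤ Real.exp (Real.log 2 * (1 - t) + Real.log (Real.log 2)) := Real.add_one_le_exp _
  have h4 : Real.exp (-Real.log (Real.log 2)) = 1 / Real.log 2 := by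
    rw [Real.exp_neg, Real.exp_log hL]; ring
  have h5 : Real.logb 2 (2 * Real.log 2) = 1 + Real.log (Real.log 2) / Real.log 2 := by
    rw [Real.logb, Real.log_mul (by norm_num) hL.ne']
    field_simp
  have hLL : Real.log 2 * (1 / Real.log 2) = 1 := by field_simp
  have hpos : (0:ℝ) ≤ 1 / Real.log 2 := by positivity
  rw [h1, h2, h4, h5]
  have h7 : 1 / Real.log 2 * (Real.log 2 * (1 - t) + Real.log (Real.log 2) + 1)
      = (1 - t) + Real.log (Real.log 2) / Real.log 2 + 1 / Real.log 2 := by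
    field_simp
  linarith [mul_le_mul_of_nonneg_left h3 hpos, h7]

/-- **Upper bound for the sort-down phase of external Heapsort:** for every `n ≥ 2`,
`n·(⌊lg n⌋ − 1) + 2·(n − 2^⌊lg n⌋) ≤ n·lg n + (1 − 1/ln 2 − lg(2·ln 2))·n`. -/
theorem external_heapsort_bound (n : ℕ) (hn : 2 ≤ n) :
    (n : ℝ) * ((⌊Real.logb 2 n⌋ : ℝ) - 1)
        + 2 * ((n : ℝ) - (2 : ℝ) ^ (⌊Real.logb 2 n⌋ : ℤ))
      ≤ (n : ℝ) * Real.logb 2 n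
        + (1 - 1 / Real.log 2 - Real.logb 2 (2 * Real.log 2)) * n := by
  have hn0 : (0:ℝ) < (n:ℝ) := by
    have : (0:ℕ) < n := by omega
    exact_mod_cast this
  have hL : (0:ℝ) < Real.log 2 := Real.log_pos (by norm_num)
  set s := Real.logb 2 (n:ℝ) with hs
  set k : ℤ := ⌊s⌋ with hk
  have hpow : (2:ℝ) ^ (k:ℤ) = (n:ℝ) * (2:ℝ) ^ ((k:ℝ) - s : ℝ) := by
    have hne : (n:ℝ) = (2:ℝ) ^ (s:ℝ) :=
      (Real.rpow_logb (by norm_num) (by norm_num) hn0).symm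
    rw [← Real.rpow_intCast, hne, ← Real.rpow_add (by norm_num)]
    ring_nf
  have hkey := heapsort_key (s - (k:ℝ))
  have hsplit : (2:ℝ) ^ (1 - (s - (k:ℝ)) : ℝ) = 2 * (2:ℝ) ^ ((k:ℝ) - s : ℝ) := by
    rw [show (1 - (s - (k:ℝ)) : ℝ) = 1 + ((k:ℝ) - s) by ring,
      Real.rpow_add (by norm_num), Real.rpow_one]
  rw [hsplit] at hkey
  have hmul := mul_le_mul_of_nonneg_left hkey hn0.le
  rw [hpow]
  nlinarith [hmul]
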